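/- arXiv:2101.02574 — 10 statements merged into one kernel-verified Lean document; each statement's English description precedes it below -/
import Mathlib

section
/- Let H be a directed graph and P = p_1 p_2 ... p_ℓ a simple directed path in H. For a vertex u, let first(u) denote the earliest vertex of P (with respect to the order along P) reachable from u in H, and for a vertex v let last(v) denote the latest vertex of P from which v is reachable in H. Then there exists a directed u→v walk in H passing through some vertex of P if and only if both first(u) and last(v) exist and first(u) precedes or equals last(v) in the order along P. -/
/-- A (directed) walk in digraph `G` from `a` to `b`, given as its list of vertices. -/
def DiWalk {V : Type*} (G : V → V → Prop) (a b : V) (l : List V) : Prop :=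
  List.Chain' G l ∧ l.head? = some a ∧ l.getLast? = some b

namespace Stmt0Aux

variable {V : Type*} {H : V → V → Prop}

lemma mem_of_getLast?_eq {l : List V} {b : V} (h : l.getLast? = some b) : b ∈ l := by
  obtain ⟨ys, rfl⟩ := List.getLast?_eq_some_iff.mp h
  simp

lemma diwalk_snoc {a b c : V} {l : List V} (h : DiWalk H a b l) (e : H b c) :
    DiWalk H a c (l ++ [c]) := by
  obtain ⟨hc, hh, hl⟩ := h
  have hne : l ≠ [] := by rintro rfl; simp at hh
  refine ⟨?_, ?_, ?_⟩
  · show List.IsChain H (l ++ [c]); rw [List.isChain_append]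
    refine ⟨hc, List.isChain_singleton _, ?_⟩
    intro x hx y hy
    simp at hy; subst hy
    rw [hl] at hx; simp at hx; subst hx; exact e
  · rw [List.head?_append_of_ne_nil _ hne]; exact hh
  · simp

lemma diwalk_of_rtg {a b : V} (h : Relation.ReflTransGen H a b) :
    ∃ l, DiWalk H a b l := by
  induction h with
  | refl => exact ⟨[a], List.isChain_singleton _, rfl, rfl⟩
  | tail _ e ih => obtain ⟨l, hl⟩ := ih; exact ⟨_, diwalk_snoc hl e⟩

lemma diwalk_through {a b c : V} (h1 : Relation.ReflTransGen H a b)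
    (h2 : Relation.ReflTransGen H b c) :
    ∃ l, DiWalk H a c l ∧ b ∈ l := by
  obtain ⟨l₁, hw₁⟩ := diwalk_of_rtg h1
  induction h2 with
  | refl => exact ⟨l₁, hw₁, mem_of_getLast?_eq hw₁.2.2⟩
  | tail _ e ih =>
      obtain ⟨l, hw, hb⟩ := ih
      exact ⟨_, diwalk_snoc hw e, List.mem_append_left _ hb⟩

lemma reach_of_head : ∀ {l : List V} {a w : V}, List.Chain' H l → l.head? = some a →
    w ∈ l → Relation.ReflTransGen H a w := by
  intro l
  induction l with
  | nil => intro a w _ h; simp at h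
  | cons x t ih =>
      intro a w hc hh hw
      simp at hh; subst hh
      rcases List.mem_cons.mp hw with rfl | hw
      · exact Relation.ReflTransGen.refl
      · match t, hw with
        | y :: t', hw =>
          have e : H x y := (List.isChain_cons_cons.mp hc).1
          exact Relation.ReflTransGen.head e (ih (List.IsChain.tail hc) rfl hw)

lemma reach_of_last : ∀ {l : List V} {b w : V}, List.Chain' H l → l.getLast? = some b →
    w ∈ l → Relation.ReflTransGen H w b := by
  intro l
  induction l with
  | nil => intro b w _ h; simp at h
  | cons x t ih =>
      intro b w hc hl hw
      rcases List.mem_cons.mp hw with rfl | hw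
      · exact reach_of_head hc rfl (mem_of_getLast?_eq hl)
      · have hne : t ≠ [] := by rintro rfl; simp at hw
        match t, hne with
        | y :: t', _ =>
          rw [List.getLast?_cons_cons] at hl
          exact ih (List.IsChain.tail hc) hl hw

lemma reach_along {p : List V} (hchain : List.Chain' H p) :
    ∀ (i j : ℕ) (hi : i < p.length) (hj : j < p.length), i ≤ j →
      Relation.ReflTransGen H (p.get ⟨i, hi⟩) (p.get ⟨j, hj⟩) := by
  intro i j
  induction j with
  | zero =>
      intro hi hj hij
      have : i = 0 := Nat.le_zero.mp hij
      subst this; exact Relation.ReflTransGen.refl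
  | succ n ih =>
      intro hi hj hij
      rcases Nat.lt_or_ge i (n+1) with h | h
      · have hn : n < p.length := Nat.lt_of_succ_lt hj
        have e : H (p.get ⟨n, hn⟩) (p.get ⟨n+1, hj⟩) := by
          have := List.isChain_iff_getElem.mp hchain n (by omega)
          simpa using this
        exact Relation.ReflTransGen.tail (ih hi hn (by omega)) e
      · have : i = n + 1 := by omega
        subst this; exact Relation.ReflTransGen.refl

end Stmt0Aux

open Stmt0Aux in
/-- a `u → v` walk in `H` passes through the simple directed path `p`
iff `first(u)` and `last(v)` exist and `first(u)` precedes or equals `last(v)`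
in the order along `p`. -/
theorem stmt_0 {V : Type*} (H : V → V → Prop) (p : List V)
    (hchain : List.Chain' H p) (hnodup : p.Nodup) (u v : V) :
    (∃ l : List V, DiWalk H u v l ∧ ∃ w ∈ l, w ∈ p) ↔
    (∃ i j : Fin p.length,
      Relation.ReflTransGen H u (p.get i) ∧
      (∀ i' : Fin p.length, Relation.ReflTransGen H u (p.get i') → i ≤ i') ∧
      Relation.ReflTransGen H (p.get j) v ∧
      (∀ j' : Fin p.length, Relation.ReflTransGen H (p.get j') v → j' ≤ j) ∧
      (i : ℕ) ≤ (j : ℕ)) := by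
  constructor
  · rintro ⟨l, ⟨hc, hh, hl⟩, w, hwl, hwp⟩
    classical
    obtain ⟨k, hk⟩ := List.mem_iff_get.mp hwp
    have huw : Relation.ReflTransGen H u w := reach_of_head hc hh hwl
    have hwv : Relation.ReflTransGen H w v := reach_of_last hc hl hwl
    set S : Finset (Fin p.length) :=
      Finset.univ.filter (fun i => Relation.ReflTransGen H u (p.get i)) with hS
    set T : Finset (Fin p.length) :=
      Finset.univ.filter (fun j => Relation.ReflTransGen H (p.get j) v) with hT
    have hkS : k ∈ S := by simp only [hS, Finset.mem_filter, Finset.mem_univ, true_and, hk]; exact huw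
    have hkT : k ∈ T := by simp only [hT, Finset.mem_filter, Finset.mem_univ, true_and, hk]; exact hwv
    have hSne : S.Nonempty := ⟨k, hkS⟩
    have hTne : T.Nonempty := ⟨k, hkT⟩
    refine ⟨S.min' hSne, T.max' hTne, ?_, ?_, ?_, ?_, ?_⟩
    · exact (Finset.mem_filter.mp (S.min'_mem hSne)).2
    · intro i' hi'
      exact S.min'_le i' (Finset.mem_filter.mpr ⟨Finset.mem_univ _, hi'⟩)
    · exact (Finset.mem_filter.mp (T.max'_mem hTne)).2
    · intro j' hj'
      exact T.le_max' j' (Finset.mem_filter.mpr ⟨Finset.mem_univ _, hj'⟩)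
    · exact le_trans (S.min'_le k hkS) (T.le_max' k hkT)
  · rintro ⟨i, j, hui, -, hjv, -, hij⟩
    have hmid : Relation.ReflTransGen H (p.get i) (p.get j) :=
      reach_along hchain i j i.isLt j.isLt hij
    obtain ⟨l, hw, hmem⟩ := diwalk_through hui (hmid.trans hjv)
    exact ⟨l, hw, p.get i, hmem, List.get_mem p i⟩
end

section
/- Let G be a flow graph with start vertex s (every vertex reachable from s), and let D be its dominator tree. Let v ≠ s be a vertex and let w be any vertex that is not a descendant of v in D. Then every simple directed path in G from w to any descendant of v in D contains v. -/
/-- `a` dominates `b` in the flow graph `(G, s)`: every walk from `s` to `b` contains `a`. -/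
def Dom {V : Type*} (G : V → V → Prop) (s a b : V) : Prop :=
  ∀ l, DiWalk G s b l → a ∈ l

lemma DiWalk.append {V : Type*} {G : V → V → Prop} {a b c : V} {l₁ l₂ : List V}
    (h₁ : DiWalk G a b l₁) (h₂ : DiWalk G b c l₂) : DiWalk G a c (l₁ ++ l₂.tail) := by
  obtain ⟨c₁, h₁h, h₁l⟩ := h₁
  obtain ⟨c₂, h₂h, h₂l⟩ := h₂
  obtain ⟨t, rfl⟩ : ∃ t, l₂ = b :: t := by
    cases l₂ with
    | nil => simp at h₂h
    | cons x t =>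
      obtain rfl : x = b := by simpa using h₂h
      exact ⟨t, rfl⟩
  refine ⟨?_, ?_, ?_⟩
  · rw [show List.Chain' G _ = List.IsChain G _ from rfl, List.isChain_append]
    refine ⟨c₁, c₂.tail, ?_⟩
    intro x hx y hy
    have hxb : x = b := by rw [h₁l] at hx; exact (by simpa using hx : b = x).symm
    subst hxb
    cases t with
    | nil => simp at hy
    | cons y' t' =>
      obtain rfl : y' = y := by simpa using hy
      exact (List.isChain_cons_cons.mp c₂).1
  · cases l₁ with
    | nil => simp at h₁h
    | cons x t₁ => simpa using h₁h
  · cases t with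
    | nil =>
      have : b = c := by simpa using h₂l
      subst this
      simpa using h₁l
    | cons y' t' =>
      have h : (y' :: t').getLast? = some c := by
        rw [List.getLast?_cons_cons] at h₂l; exact h₂l
      simp [List.getLast?_append, h]

/-- in a flow graph with start vertex `s`, if `v ≠ s` and `w` is not a
descendant of `v` in the dominator tree (i.e. `v` does not dominate `w`), then every
simple directed path from `w` to any descendant `w'` of `v` (i.e. any `w'` dominated
by `v`) contains `v`. -/
theorem stmt_2 {V : Type*} (G : V → V → Prop) (s : V)
    (hflow : ∀ v, ∃ l, DiWalk G s v l)
    (v w : V) (hv : v ≠ s) (hw : ¬ Dom G s v w)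
    (w' : V) (hw' : Dom G s v w')
    (l : List V) (hl : DiWalk G w w' l) (hsimple : l.Nodup) :
    v ∈ l := by
  simp only [Dom, not_forall, Classical.not_imp] at hw
  obtain ⟨l₀, hl₀, hv₀⟩ := hw
  have := hw' _ (hl₀.append hl)
  rcases List.mem_append.mp this with h | h
  · exact absurd h hv₀
  · exact List.mem_of_mem_tail h
end

section
/- Let G be a flow graph with start vertex s and dominator tree D, and let v ≠ s be a non-leaf vertex of D. Then for every vertex w in the subtree D[v] of D rooted at v, there exists a simple directed path from v to w in the induced subgraph G[D[v]] (i.e., a path using only vertices that are descendants of v in D). -/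
/-- Split a list at the *last* occurrence of an element. -/
lemma last_split {α : Type*} {v : α} : ∀ {l : List α}, v ∈ l →
    ∃ p q, l = p ++ v :: q ∧ v ∉ q := by
  classical
  intro l
  induction l with
  | nil => intro h; simp at h
  | cons a t ih =>
    intro h
    by_cases hvt : v ∈ t
    · obtain ⟨p, q, rfl, hq⟩ := ih hvt
      exact ⟨a :: p, q, rfl, hq⟩
    · rcases List.mem_cons.1 h with h1 | h1
      · exact ⟨[], t, by simp [h1], hvt⟩
      · exact absurd h1 hvt

/-- A non-nodup list has a duplicate decomposition. -/
lemma dup_split {α : Type*} : ∀ {l : List α}, ¬ l.Nodup →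
    ∃ (x : α) (p q r : List α), l = p ++ x :: (q ++ x :: r) := by
  classical
  intro l
  induction l with
  | nil => intro h; simp at h
  | cons a t ih =>
    intro h
    rw [List.nodup_cons] at h
    by_cases hat : a ∈ t
    · obtain ⟨q, r, rfl⟩ := List.append_of_mem hat
      exact ⟨a, [], q, r, rfl⟩
    · have ht : ¬ t.Nodup := fun hn => h ⟨hat, hn⟩
      obtain ⟨x, p, q, r, rfl⟩ := ih ht
      exact ⟨x, a :: p, q, r, rfl⟩

/-- Remove duplicates from a walk, keeping endpoints and vertex set. -/
lemma diwalk_dedup {V : Type*} {G : V → V → Prop} :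
    ∀ (n : ℕ) {l : List V} {a b : V}, l.length ≤ n → DiWalk G a b l →
    ∃ l', DiWalk G a b l' ∧ l'.Nodup ∧ ∀ y ∈ l', y ∈ l := by
  classical
  intro n
  induction n with
  | zero =>
    intro l a b hlen hw
    exact ⟨l, hw, by simp [List.length_eq_zero_iff.1 (Nat.le_zero.1 hlen)], fun y hy => hy⟩
  | succ n ih =>
    intro l a b hlen hw
    by_cases hnd : l.Nodup
    · exact ⟨l, hw, hnd, fun y hy => hy⟩
    · obtain ⟨x, p, q, r, rfl⟩ := dup_split hnd
      obtain ⟨hc, hh, hg⟩ := hw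
      -- the shortened walk
      have hc1 : List.Chain' G (p ++ x :: r) := by
        change List.IsChain G _ at hc
        rw [List.isChain_append] at hc
        obtain ⟨hcp, hcrest, hjunct⟩ := hc
        have hcxr : List.Chain' G (x :: r) :=
          hcrest.suffix ⟨x :: q, by simp⟩
        change List.IsChain G _
        rw [List.isChain_append]
        refine ⟨hcp, hcxr, fun u hu z hz => ?_⟩
        simp only [List.head?_cons, Option.mem_some_iff] at hz
        subst hz
        exact hjunct u hu x (by simp)
      have hh1 : (p ++ x :: r).head? = some a := by
        rw [List.head?_append] at hh ⊢
        cases p <;> simpa using hh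
      have hg1 : (p ++ x :: r).getLast? = some b := by
        obtain ⟨z, hz⟩ : ∃ z, (x :: r).getLast? = some z :=
          ⟨(x :: r).getLast (by simp), List.getLast?_eq_getLast _⟩
        have hg' : ((x :: q) ++ x :: r).getLast? = some b := by simpa using hg
        rw [List.getLast?_append] at hg'
        rw [List.getLast?_append, hz]
        rw [hz] at hg'
        simpa using hg'
      have hlen1 : (p ++ x :: r).length ≤ n := by
        simp only [List.length_append, List.length_cons] at hlen ⊢
        omega
      obtain ⟨l', hw', hnd', hsub'⟩ := ih hlen1 ⟨hc1, hh1, hg1⟩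
      refine ⟨l', hw', hnd', fun y hy => ?_⟩
      have := hsub' y hy
      simp only [List.mem_append, List.mem_cons] at this ⊢
      tauto

/-- if `v ≠ s` is a non-leaf of the dominator tree of the flow graph
`(G, s)` (i.e. `v` properly dominates some vertex), then for every `w` dominated by
`v` there is a simple directed path from `v` to `w` using only vertices dominated
by `v` (the induced subgraph `G[D[v]]`). -/
theorem stmt_4 {V : Type*} (G : V → V → Prop) (s : V)
    (hflow : ∀ v, ∃ l, DiWalk G s v l)
    (v : V) (hv : v ≠ s) (hnonleaf : ∃ c, c ≠ v ∧ Dom G s v c)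
    (w : V) (hw : Dom G s v w) :
    ∃ l, DiWalk G v w l ∧ l.Nodup ∧ ∀ y ∈ l, Dom G s v y := by
  classical
  obtain ⟨l, hl⟩ := hflow w
  have hvl : v ∈ l := hw l hl
  obtain ⟨p, q, rfl, hvq⟩ := last_split hvl
  obtain ⟨hc, hh, hg⟩ := hl
  -- the suffix walk t = v :: q from v to w
  have hct : List.Chain' G (v :: q) := hc.suffix ⟨p, rfl⟩
  have hgt : (v :: q).getLast? = some w := by
    rw [List.getLast?_append] at hg
    obtain ⟨z, hz⟩ : ∃ z, (v :: q).getLast? = some z :=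
      ⟨(v :: q).getLast (by simp), List.getLast?_eq_getLast _⟩
    rw [hz] at hg ⊢
    simpa using hg
  have hwalk : DiWalk G v w (v :: q) := ⟨hct, rfl, hgt⟩
  -- every vertex of the suffix is dominated by v
  have hdom : ∀ y ∈ (v :: q), Dom G s v y := by
    intro y hy m hm
    by_contra hvm
    rcases List.mem_cons.1 hy with rfl | hyq
    · exact hvm (List.mem_of_getLast? hm.2.2)
    · obtain ⟨q₁, q₂, rfl⟩ := List.append_of_mem hyq
      obtain ⟨hcm, hhm, hgm⟩ := hm
      -- splice: m ++ q₂ is a walk from s to w avoiding v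
      have hcyq : List.Chain' G (y :: q₂) :=
        hc.suffix ⟨p ++ v :: q₁, by simp⟩
      have hc' : List.Chain' G (m ++ q₂) := by
        change List.IsChain G _
        rw [List.isChain_append]
        refine ⟨hcm, (List.isChain_cons.1 hcyq).2, ?_⟩
        intro x hx z hz
        rw [hgm] at hx
        simp only [Option.mem_some_iff] at hx
        subst hx
        exact (List.isChain_cons.1 hcyq).1 z hz
      have hh' : (m ++ q₂).head? = some s := by
        rw [List.head?_append, hhm]; rfl
      have hg' : (m ++ q₂).getLast? = some w := by
        have h1 : (y :: q₂).getLast? = some w := by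
          have h2 : ((v :: q₁) ++ y :: q₂).getLast? = some w := by
            simpa using hgt
          rw [List.getLast?_append] at h2
          obtain ⟨z, hz⟩ : ∃ z, (y :: q₂).getLast? = some z :=
            ⟨(y :: q₂).getLast (by simp), List.getLast?_eq_getLast _⟩
          rw [hz] at h2 ⊢
          simpa using h2
        cases q₂ with
        | nil =>
          simp only [List.getLast?_singleton, Option.some.injEq] at h1
          rw [List.append_nil, hgm, h1]
        | cons c cs =>
          rw [List.getLast?_append]
          rw [List.getLast?_cons_cons] at h1
          rw [h1]; rfl
      have hvm' : v ∈ m ++ q₂ := hw _ ⟨hc', hh', hg'⟩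
      rcases List.mem_append.1 hvm' with h1 | h1
      · exact hvm h1
      · exact hvq (by simp [h1])
  -- deduplicate
  obtain ⟨l', hw', hnd', hsub'⟩ := diwalk_dedup (v :: q).length le_rfl hwalk
  exact ⟨l', hw', hnd', fun y hy => hdom y (hsub' y hy)⟩
end

section
/- Let G be a directed graph, P a simple directed path in G, and x a vertex not on P. Define last_{G−x}(v) as the latest vertex of P (in path order) that can reach v in G−x, and last*_{G−x}(v) as the latest vertex of P that can reach v in G−x via a satellite path (a path whose internal vertices avoid P; for v on P set last*_{G−x}(v)=v). Then, whenever last*_{G−x}(v) exists, last_{G−x}(v) equals the latest vertex of P lying in the strongly connected component of last*_{G−x}(v) in G−x. -/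
/-- The graph `G` with the vertex `x` removed (induced subgraph `G − x`). -/
def Del {V : Type*} (G : V → V → Prop) (x : V) : V → V → Prop :=
  fun a b => G a b ∧ a ≠ x ∧ b ≠ x

/-- `Sat G p a b`: there is a satellite walk (internal vertices avoiding `p`)
from `a` to `b` in `G`. -/
def Sat {V : Type*} (G : V → V → Prop) (p : List V) (a b : V) : Prop :=
  ∃ l, DiWalk G a b l ∧ ∀ w ∈ l.tail.dropLast, w ∉ p

lemma sat_refl {V : Type*} (G : V → V → Prop) (p : List V) (v : V) : Sat G p v v := by
  exact ⟨[v], ⟨List.isChain_singleton v, rfl, rfl⟩, by simp⟩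

lemma diwalk_reach {V : Type*} {G : V → V → Prop} {a b : V} {l : List V}
    (h : DiWalk G a b l) : Relation.ReflTransGen G a b := by
  obtain ⟨hc, hh, hl⟩ := h
  induction l generalizing a with
  | nil => simp at hh
  | cons c t ih =>
    simp at hh; subst hh
    cases t with
    | nil => simp at hl; subst hl; exact .refl
    | cons d t' =>
      dsimp only [List.Chain'] at hc; rw [List.isChain_cons_cons] at hc
      exact (Relation.ReflTransGen.single hc.1).trans (ih hc.2 rfl (by simpa using hl))

lemma sat_prepend {V : Type*} {G : V → V → Prop} {p : List V} {a b v : V}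
    (hab : G a b) (hb : b ∉ p) (h : Sat G p b v) : Sat G p a v := by
  obtain ⟨l, ⟨hc, hh, hl⟩, hint⟩ := h
  cases l with
  | nil => simp at hh
  | cons c t =>
    simp at hh; subst hh
    refine ⟨a :: c :: t, ⟨List.isChain_cons_cons.2 ⟨hab, hc⟩, rfl, by simpa using hl⟩, ?_⟩
    intro w hw
    simp only [List.tail_cons] at hw
    cases t with
    | nil => simp at hw
    | cons d t' =>
      rw [List.dropLast_cons₂] at hw
      rcases List.mem_cons.1 hw with rfl | hw
      · exact hb
      · exact hint w hw

lemma reach_along {V : Type*} {R : V → V → Prop} {p : List V} (h : List.Chain' R p) :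
    ∀ i j : Fin p.length, i ≤ j → Relation.ReflTransGen R (p.get i) (p.get j) := by
  have key : ∀ n (i : Fin p.length) (hn : i.val + n < p.length),
      Relation.ReflTransGen R (p.get i) (p.get ⟨i.val + n, hn⟩) := by
    intro n
    induction n with
    | zero => intro i hn; simp; exact Relation.ReflTransGen.refl
    | succ m ih =>
      intro i hn
      have h1 : i.val + m < p.length := by omega
      refine (ih i h1).tail ?_
      exact List.isChain_iff_getElem.1 h (i.val + m) (by omega)
  intro i j hij
  have : j = ⟨i.val + (j.val - i.val), by omega⟩ := by
    apply Fin.ext; simp; omega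
  rw [this]
  exact key _ i _

lemma decompose {V : Type*} {G : V → V → Prop} {p : List V} {v : V} :
    ∀ a, Relation.ReflTransGen G a v →
      Sat G p a v ∨ ∃ k : Fin p.length,
        Relation.ReflTransGen G a (p.get k) ∧ Sat G p (p.get k) v := by
  intro a h
  induction h using Relation.ReflTransGen.head_induction_on with
  | refl => exact Or.inl (sat_refl G p v)
  | head hab _ ih =>
    rename_i a b _
    rcases ih with hs | ⟨k, hk1, hk2⟩
    · by_cases hb : b ∈ p
      · obtain ⟨k, hk⟩ := List.mem_iff_get.1 hb
        exact Or.inr ⟨k, Relation.ReflTransGen.single (hk ▸ hab), hk ▸ hs⟩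
      · exact Or.inl (sat_prepend hab hb hs)
    · exact Or.inr ⟨k, (Relation.ReflTransGen.single hab).trans hk1, hk2⟩

/-- with `x ∉ V(P)`, whenever `last*₍G−x₎(v)` exists (given here as
`p.get jstar`, the latest vertex of `P` with a satellite path to `v` in `G − x`,
with `last* v = v` for `v` on `P`), the latest vertex of `P` that can reach `v`
in `G − x` exists and equals the latest vertex of `P` lying in the strongly
connected component of `last*₍G−x₎(v)` in `G − x`. -/
theorem stmt_5 {V : Type*} (G : V → V → Prop) (p : List V)
    (hchain : List.Chain' G p) (hnodup : p.Nodup) (x : V) (hx : x ∉ p) (v : V)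
    (jstar : Fin p.length)
    (hcase1 : v ∈ p → p.get jstar = v)
    (hcase2 : v ∉ p → Sat (Del G x) p (p.get jstar) v ∧
      ∀ j : Fin p.length, Sat (Del G x) p (p.get j) v → j ≤ jstar) :
    ∃ jm : Fin p.length,
      (Relation.ReflTransGen (Del G x) (p.get jm) (p.get jstar) ∧
       Relation.ReflTransGen (Del G x) (p.get jstar) (p.get jm)) ∧
      (∀ j : Fin p.length,
        (Relation.ReflTransGen (Del G x) (p.get j) (p.get jstar) ∧
         Relation.ReflTransGen (Del G x) (p.get jstar) (p.get j)) → j ≤ jm) ∧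
      Relation.ReflTransGen (Del G x) (p.get jm) v ∧
      (∀ j : Fin p.length, Relation.ReflTransGen (Del G x) (p.get j) v → j ≤ jm) := by
  classical
  have hchain' : List.Chain' (Del G x) p := by
    dsimp only [List.Chain'] at hchain ⊢; rw [List.isChain_iff_getElem] at hchain ⊢
    intro i hi
    exact ⟨hchain i hi, ne_of_mem_of_not_mem (List.getElem_mem _) hx,
      ne_of_mem_of_not_mem (List.getElem_mem _) hx⟩
  have hreach := reach_along hchain'
  set Pred : Fin p.length → Prop := fun j =>
    Relation.ReflTransGen (Del G x) (p.get j) (p.get jstar) ∧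
    Relation.ReflTransGen (Del G x) (p.get jstar) (p.get j) with hPred
  have hjs : jstar ∈ Finset.univ.filter Pred :=
    Finset.mem_filter.2 ⟨Finset.mem_univ _, .refl, .refl⟩
  set jm := (Finset.univ.filter Pred).max' ⟨jstar, hjs⟩ with hjmdef
  have hjm_pred : Pred jm :=
    (Finset.mem_filter.1 ((Finset.univ.filter Pred).max'_mem ⟨jstar, hjs⟩)).2
  have hmax : ∀ j, Pred j → j ≤ jm := fun j hj =>
    Finset.le_max' _ j (Finset.mem_filter.2 ⟨Finset.mem_univ _, hj⟩)
  have hsv : Relation.ReflTransGen (Del G x) (p.get jstar) v := by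
    by_cases hv : v ∈ p
    · rw [hcase1 hv]
    · obtain ⟨l, hw, _⟩ := (hcase2 hv).1
      exact diwalk_reach hw
  refine ⟨jm, hjm_pred, hmax, hjm_pred.1.trans hsv, ?_⟩
  intro j hj
  by_cases hjle : j ≤ jstar
  · exact hjle.trans (hmax jstar ⟨.refl, .refl⟩)
  · have hsl : jstar ≤ j := le_of_not_ge hjle
    by_cases hv : v ∈ p
    · exact hmax j ⟨hcase1 hv ▸ hj, hreach jstar j hsl⟩
    · rcases decompose (p.get j) hj with hs | ⟨k, hk1, hk2⟩
      · exact absurd ((hcase2 hv).2 j hs) hjle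
      · exact hmax j ⟨hk1.trans (hreach k jstar ((hcase2 hv).2 k hk2)), hreach jstar j hsl⟩
end

section
/- Let G be a directed graph and P = p_1 ... p_ℓ a simple directed path in G. Let u, v be vertices and suppose first*(u) = p_i and last*(v) = p_j both exist, where first*(u) is the earliest vertex of P reachable from u by a satellite path and last*(v) is the latest vertex of P that reaches v by a satellite path. If there exists a u→v path in G passing through a vertex of P, and p_i and p_j are NOT strongly connected in G, then p_i strictly precedes p_j in the order along P. -/
lemma walkReach {V : Type*} {G : V → V → Prop} :
    ∀ (l : List V) (a b : V), DiWalk G a b l → Relation.ReflTransGen G a b := by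
  intro l
  induction l with
  | nil => intro a b h; simp [DiWalk] at h
  | cons x t ih =>
    intro a b h
    obtain ⟨hc, hh, hl⟩ := h
    have hx : x = a := by simpa using hh
    subst hx
    cases t with
    | nil =>
      simp [List.getLast?] at hl
      subst hl; exact .refl
    | cons y t' =>
      rw [List.getLast?_cons_cons] at hl
      have := ih y b ⟨hc.tail, rfl, hl⟩
      exact .head (List.isChain_cons_cons.mp hc).1 this

lemma chainReach {V : Type*} {G : V → V → Prop} {l : List V} (hc : List.Chain' G l) :
    ∀ (j : ℕ) (hj : j < l.length) (i : ℕ) (hij : i ≤ j),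
    Relation.ReflTransGen G (l.get ⟨i, lt_of_le_of_lt hij hj⟩) (l.get ⟨j, hj⟩) := by
  intro j
  induction j with
  | zero =>
    intro hj i hij
    interval_cases i
    exact .refl
  | succ n ih =>
    intro hj i hij
    rcases Nat.lt_or_ge i (n + 1) with h | h
    · have step : G (l.get ⟨n, by omega⟩) (l.get ⟨n + 1, hj⟩) :=
        List.isChain_iff_getElem.mp hc n (by omega)
      exact (ih (by omega) i (by omega)).tail step
    · have : i = n + 1 := by omega
      subst this
      exact .refl

lemma claim1 {V : Type*} (G : V → V → Prop) (p : List V) :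
    ∀ (l : List V) (u v : V), DiWalk G u v l → (∃ w ∈ l, w ∈ p) →
    ∃ w1, w1 ∈ p ∧ Sat G p u w1 ∧ ∃ l', DiWalk G w1 v l' ∧ l'.length ≤ l.length := by
  intro l
  induction l with
  | nil => intro u v h _; simp [DiWalk] at h
  | cons x t ih =>
    rintro u v ⟨hc, hh, hl⟩ hthru
    have hx : x = u := by simpa using hh
    subst hx
    by_cases hup : x ∈ p
    · exact ⟨x, hup, ⟨[x], ⟨List.isChain_singleton x, rfl, rfl⟩, by simp⟩,
        ⟨x :: t, ⟨hc, rfl, hl⟩, le_refl _⟩⟩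
    · obtain ⟨w, hw, hwp⟩ := hthru
      have hwt : w ∈ t := by
        rcases List.mem_cons.mp hw with h | h
        · exact absurd (h ▸ hwp) hup
        · exact h
      cases t with
      | nil => simp at hwt
      | cons y t' =>
        rw [List.getLast?_cons_cons] at hl
        by_cases hyp : y ∈ p
        · refine ⟨y, hyp, ⟨[x, y], ⟨?_, rfl, rfl⟩, by simp⟩,
            ⟨y :: t', ⟨hc.tail, rfl, hl⟩, by simp⟩⟩
          exact List.isChain_cons_cons.mpr ⟨(List.isChain_cons_cons.mp hc).1, List.isChain_singleton y⟩
        · have hwt' : w ∈ t' := by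
            rcases List.mem_cons.mp hwt with h | h
            · exact absurd (h ▸ hwp) hyp
            · exact h
          obtain ⟨w1, hw1p, ⟨m, hmw, hmint⟩, l', hl', hlen⟩ :=
            ih y v ⟨hc.tail, rfl, hl⟩ ⟨w, List.mem_cons_of_mem _ hwt', hwp⟩
          obtain ⟨hmc, hmh, hml⟩ := hmw
          cases m with
          | nil => simp at hmh
          | cons z m' =>
            have hz : z = y := by simpa using hmh
            subst hz
            refine ⟨w1, hw1p, ⟨x :: z :: m',
              ⟨List.isChain_cons_cons.mpr ⟨(List.isChain_cons_cons.mp hc).1, hmc⟩, rfl,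
                by rw [List.getLast?_cons_cons]; exact hml⟩, ?_⟩,
              l', hl', hlen.trans (by simp)⟩
            intro a ha
            simp only [List.tail_cons] at ha
            cases m' with
            | nil => simp at ha
            | cons b m'' =>
              rw [List.dropLast_cons₂] at ha
              rcases List.mem_cons.mp ha with h | h
              · exact h ▸ hyp
              · exact hmint a (by simpa using h)

lemma claim2 {V : Type*} (G : V → V → Prop) (p : List V) :
    ∀ (n : ℕ) (l : List V), l.length ≤ n → ∀ (x v : V), DiWalk G x v l → x ∈ p →
    ∃ w2, w2 ∈ p ∧ Sat G p w2 v ∧ Relation.ReflTransGen G x w2 := by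
  intro n
  induction n with
  | zero =>
    intro l hl x v hw _
    cases l with
    | nil => simp [DiWalk] at hw
    | cons a t => simp at hl
  | succ n ih =>
    intro l hl x v hw hxp
    obtain ⟨hc, hh, hlast⟩ := hw
    cases l with
    | nil => simp at hh
    | cons z t =>
      have hz : z = x := by simpa using hh
      subst hz
      by_cases ht : ∃ w ∈ t, w ∈ p
      · cases t with
        | nil => simp at ht
        | cons y t' =>
          rw [List.getLast?_cons_cons] at hlast
          obtain ⟨w1, hw1p, hsat, l', hwl', hlen⟩ :=
            claim1 G p (y :: t') y v ⟨hc.tail, rfl, hlast⟩ ht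
          obtain ⟨w2, hw2p, hsat2, hreach⟩ := ih l' (by simp only [List.length_cons] at hl hlen; omega) w1 v hwl' hw1p
          refine ⟨w2, hw2p, hsat2, ?_⟩
          have hxy : G z y := (List.isChain_cons_cons.mp hc).1
          obtain ⟨m, hm, _⟩ := hsat
          exact (Relation.ReflTransGen.head hxy (walkReach m y w1 hm)).trans hreach
      · push_neg at ht
        refine ⟨z, hxp, ⟨z :: t, ⟨hc, rfl, hlast⟩, ?_⟩, .refl⟩
        intro w hw
        simp only [List.tail_cons] at hw
        exact ht w ((List.dropLast_sublist t).subset hw)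

/-- if `first*(u) = p.get i` and `last*(v) = p.get j` exist, some
`u → v` path passes through `V(P)`, and `p.get i`, `p.get j` are not strongly
connected in `G`, then `p.get i` strictly precedes `p.get j` on `P`. -/
theorem stmt_7 {V : Type*} (G : V → V → Prop) (p : List V)
    (hchain : List.Chain' G p) (hnodup : p.Nodup) (u v : V)
    (i j : Fin p.length)
    (hi1 : Sat G p u (p.get i))
    (hi2 : ∀ i' : Fin p.length, Sat G p u (p.get i') → i ≤ i')
    (hj1 : Sat G p (p.get j) v)
    (hj2 : ∀ j' : Fin p.length, Sat G p (p.get j') v → j' ≤ j)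
    (hthrough : ∃ l, DiWalk G u v l ∧ ∃ w ∈ l, w ∈ p)
    (hnsc : ¬ (Relation.ReflTransGen G (p.get i) (p.get j) ∧
               Relation.ReflTransGen G (p.get j) (p.get i))) :
    (i : ℕ) < (j : ℕ) := by
  obtain ⟨l, hw, w, hwl, hwp⟩ := hthrough
  obtain ⟨w1, hw1p, hsat1, l', hwl', _⟩ := claim1 G p l u v hw ⟨w, hwl, hwp⟩
  obtain ⟨w2, hw2p, hsat2, hreach⟩ := claim2 G p l'.length l' le_rfl w1 v hwl' hw1p
  obtain ⟨i1, hi1eq⟩ := List.mem_iff_get.mp hw1p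
  obtain ⟨i2, hi2eq⟩ := List.mem_iff_get.mp hw2p
  have hii1 : i ≤ i1 := hi2 i1 (hi1eq ▸ hsat1)
  have hi2j : i2 ≤ j := hj2 i2 (hi2eq ▸ hsat2)
  by_contra hcon
  push_neg at hcon
  have r1 : Relation.ReflTransGen G (p.get i) (p.get i1) := by
    have := chainReach hchain i1 i1.isLt i hii1
    simpa using this
  have r2 : Relation.ReflTransGen G (p.get i2) (p.get j) := by
    have := chainReach hchain j j.isLt i2 hi2j
    simpa using this
  have r3 : Relation.ReflTransGen G (p.get j) (p.get i) := by
    have := chainReach hchain i i.isLt j hcon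
    simpa using this
  have rw12 : Relation.ReflTransGen G (p.get i1) (p.get i2) := by
    rw [hi1eq, hi2eq]; exact hreach
  exact hnsc ⟨(r1.trans rw12).trans r2, r3⟩
end

section
/- Let G be a directed graph, P a simple directed path in G with vertex order ≺, and u, v vertices such that first*(u) (the earliest vertex of P reachable from u by a satellite path) and last*(v) (the latest vertex of P reaching v by a satellite path) exist and are not strongly connected in G. If Q is any u→v path in G that meets P, with enter(Q) the first vertex of Q on P and leave(Q) the last vertex of Q on P, then it cannot simultaneously hold that last*(v) ≺ enter(Q) and leave(Q) ≺ first*(u). -/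
private lemma chain'_rtg {V : Type*} {G : V → V → Prop} {l : List V} (h : List.Chain' G l)
    {a b : ℕ} (hab : a ≤ b) (hb : b < l.length) :
    Relation.ReflTransGen G (l.get ⟨a, lt_of_le_of_lt hab hb⟩) (l.get ⟨b, hb⟩) := by
  induction hab with
  | refl => exact Relation.ReflTransGen.refl
  | @step n hn ih =>
      exact (ih (Nat.lt_of_succ_lt hb)).tail
        (List.isChain_iff_getElem.mp h n (by omega))

/-- with `first*(u) = p.get i` and `last*(v) = p.get j` not strongly
connected in `G`, and `Q` a `u → v` path meeting `P` with `enter(Q) = p.get ie`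
(its first vertex on `P`) and `leave(Q) = p.get ile` (its last vertex on `P`),
it cannot hold simultaneously that `last*(v) ≺ enter(Q)` and `leave(Q) ≺ first*(u)`. -/
theorem stmt_8 {V : Type*} (G : V → V → Prop) (p : List V)
    (hchain : List.Chain' G p) (hnodup : p.Nodup) (u v : V)
    (i j ie ile : Fin p.length)
    (hi1 : Sat G p u (p.get i))
    (hi2 : ∀ i' : Fin p.length, Sat G p u (p.get i') → i ≤ i')
    (hj1 : Sat G p (p.get j) v)
    (hj2 : ∀ j' : Fin p.length, Sat G p (p.get j') v → j' ≤ j)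
    (hnsc : ¬ (Relation.ReflTransGen G (p.get i) (p.get j) ∧
               Relation.ReflTransGen G (p.get j) (p.get i)))
    (q : List V) (hq : DiWalk G u v q)
    (henter : ∃ r1 r2, q = r1 ++ (p.get ie) :: r2 ∧ ∀ w ∈ r1, w ∉ p)
    (hleave : ∃ s1 s2, q = s1 ++ (p.get ile) :: s2 ∧ ∀ w ∈ s2, w ∉ p) :
    ¬ ((j : ℕ) < (ie : ℕ) ∧ (ile : ℕ) < (i : ℕ)) := by
  rintro ⟨hje, hili⟩
  obtain ⟨hcq, hhq, hlq⟩ := hq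
  obtain ⟨r1, r2, hqr, hr1⟩ := henter
  obtain ⟨s1, s2, hqs, hs2⟩ := hleave
  -- Sat from u to enter(Q)
  have sat1 : Sat G p u (p.get ie) := by
    refine ⟨r1 ++ [p.get ie], ⟨?_, ?_, ?_⟩, ?_⟩
    · exact hcq.prefix ⟨r2, by simp [hqr]⟩
    · have := hhq
      rw [hqr] at this
      rw [List.head?_append] at this ⊢
      simpa using this
    · simp
    · intro w hw
      apply hr1
      rcases r1 with _ | ⟨a, r1'⟩
      · simp at hw
      · simp only [List.cons_append, List.tail_cons, List.dropLast_append_cons,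
          List.dropLast_singleton, List.append_nil] at hw
        exact List.mem_cons_of_mem _ hw
  have hiie : (i : ℕ) ≤ (ie : ℕ) := hi2 ie sat1
  -- Sat from leave(Q) to v
  have sat2 : Sat G p (p.get ile) v := by
    refine ⟨p.get ile :: s2, ⟨?_, ?_, ?_⟩, ?_⟩
    · exact hcq.suffix ⟨s1, by simp [hqs]⟩
    · simp
    · have := hlq
      rw [hqs, List.getLast?_append] at this
      simpa using this
    · intro w hw
      exact hs2 w (List.mem_of_mem_dropLast (by simpa using hw))
  have hilej : (ile : ℕ) ≤ (j : ℕ) := hj2 ile sat2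
  -- positions in q
  have hs1lt : s1.length < q.length := by rw [hqs]; simp
  have hr1lt : r1.length < q.length := by rw [hqr]; simp
  have hqile : q.get ⟨s1.length, hs1lt⟩ = p.get ile := by
    simp [hqs, List.get_eq_getElem, List.getElem_append_right]
  have hqie : q.get ⟨r1.length, hr1lt⟩ = p.get ie := by
    simp [hqr, List.get_eq_getElem, List.getElem_append_right]
  have hle : r1.length ≤ s1.length := by
    by_contra hlt
    push_neg at hlt
    have h2 : q.get ⟨s1.length, hs1lt⟩ = r1.get ⟨s1.length, hlt⟩ := by
      rw [List.get_of_eq hqr]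
      simp only [List.get_eq_getElem]
      rw [List.getElem_append_left hlt]
    rw [hqile] at h2
    exact hr1 _ (h2 ▸ List.get_mem r1 ⟨s1.length, hlt⟩) (List.get_mem p ile)
  -- reachability pieces
  have hq1 : Relation.ReflTransGen G (p.get ie) (p.get ile) := by
    have := chain'_rtg hcq hle hs1lt
    rwa [hqie, hqile] at this
  have hp1 : Relation.ReflTransGen G (p.get i) (p.get ie) := by
    have := chain'_rtg hchain hiie ie.isLt
    simpa using this
  have hp2 : Relation.ReflTransGen G (p.get ile) (p.get j) := by
    have := chain'_rtg hchain hilej j.isLt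
    simpa using this
  have hp3 : Relation.ReflTransGen G (p.get j) (p.get ie) := by
    have := chain'_rtg hchain hje.le ie.isLt
    simpa using this
  have hp4 : Relation.ReflTransGen G (p.get ile) (p.get i) := by
    have := chain'_rtg hchain hili.le i.isLt
    simpa using this
  exact hnsc ⟨(hp1.trans hq1).trans hp2, (hp3.trans hq1).trans hp4⟩
end

section
/- Let G be a directed graph, P = p_1...p_ℓ a simple directed path in G, and x = p_k a vertex of P. Suppose a u→v path Q in G−x exists whose earliest P-vertex mn(Q) satisfies mn(Q) ≺ x and whose latest P-vertex mx(Q) satisfies x ≺ mx(Q), and Q can be written as Q_1 R Q_2 where R is a mn(Q)→mx(Q) subpath. Then there exists a u→v path Q' in G−x of the form Q_1 P_1 P_2 P_3 Q_2 where P_1 and P_3 are (possibly empty) subpaths of P and P_2 is a minimal detour of x. -/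
/-- `l` is a detour of `x = p.get k`: a satellite walk from `p.get i` to `p.get j`
with `i < k < j`. -/
def IsDetour {V : Type*} (G : V → V → Prop) (p : List V) (k i j : Fin p.length)
    (l : List V) : Prop :=
  DiWalk G (p.get i) (p.get j) l ∧ (∀ w ∈ l.tail.dropLast, w ∉ p) ∧
  (i : ℕ) < (k : ℕ) ∧ (k : ℕ) < (j : ℕ)

/-- `l` is a minimal detour of `x = p.get k`: a detour `p.get i → p.get j` such that
no detour `p.get i' → p.get j'` with `i ≤ i' ≤ j' ≤ j` is strictly shorter (in index span). -/
def IsMinDetour {V : Type*} (G : V → V → Prop) (p : List V) (k i j : Fin p.length)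
    (l : List V) : Prop :=
  IsDetour G p k i j l ∧
  ∀ (i' j' : Fin p.length) (l' : List V), IsDetour G p k i' j' l' →
    (i : ℕ) ≤ (i' : ℕ) → (j' : ℕ) ≤ (j : ℕ) → (j : ℕ) - (i : ℕ) ≤ (j' : ℕ) - (i' : ℕ)


section Helpers
variable {V : Type*}

lemma diwalk_append {G : V → V → Prop} {a b c : V} {l l' : List V}
    (h : DiWalk G a b l) (h' : DiWalk G b c l') :
    DiWalk G a c (l ++ l'.tail) := by
  obtain ⟨hc, hh, hl⟩ := h
  obtain ⟨hc', hh', hl'⟩ := h'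
  cases l' with
  | nil => simp at hh'
  | cons b' t' =>
    simp only [List.head?_cons, Option.some.injEq] at hh'
    subst hh'
    refine ⟨?_, ?_, ?_⟩
    · rw [List.Chain', List.isChain_append]
      refine ⟨hc, hc'.tail, ?_⟩
      intro y hy z hz
      rw [hl] at hy
      obtain rfl : b' = y := by simpa using hy
      exact (List.isChain_cons.mp hc').1 z hz
    · cases l with
      | nil => simp at hh
      | cons a' s => simpa using hh
    · cases t' with
      | nil =>
        obtain rfl : c = b' := by simpa using hl'.symm
        simpa using hl
      | cons y ys =>
        rw [List.getLast?_cons_cons] at hl'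
        simp only [List.tail_cons, List.getLast?_append, hl']
        rfl

lemma chain'_del {G : V → V → Prop} {x : V} {l : List V}
    (h : List.Chain' G l) (hx : ∀ w ∈ l, w ≠ x) : List.Chain' (Del G x) l := by
  induction l with
  | nil => exact List.isChain_nil
  | cons a t ih =>
    rw [List.Chain', List.isChain_cons] at h ⊢
    exact ⟨fun y hy => ⟨h.1 y hy, hx a (List.mem_cons_self (a := a) (l := t)),
      hx y (List.mem_cons_of_mem _ (List.mem_of_mem_head? hy))⟩,
      ih h.2 fun w hw => hx w (List.mem_cons_of_mem _ hw)⟩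

lemma tail_ne_of_chain'_del {G : V → V → Prop} {x : V} {l : List V}
    (h : List.Chain' (Del G x) l) : ∀ w ∈ l.tail, w ≠ x := by
  induction l with
  | nil => simp
  | cons a t ih =>
    cases t with
    | nil => simp
    | cons b t' =>
      rw [List.Chain', List.isChain_cons_cons] at h
      intro w hw
      rcases List.mem_cons.mp hw with rfl | hw'
      · exact h.1.2.2
      · exact ih h.2 w hw'

lemma mem_split_cases {l : List V} {w : V} (hw : w ∈ l) :
    l.head? = some w ∨ w ∈ l.tail.dropLast ∨ l.getLast? = some w := by
  cases l with
  | nil => simp at hw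
  | cons a t =>
    rcases List.mem_cons.mp hw with rfl | hw'
    · exact Or.inl rfl
    · have ht : t ≠ [] := List.ne_nil_of_mem hw'
      rw [← List.dropLast_append_getLast ht] at hw'
      rcases List.mem_append.mp hw' with h | h
      · exact Or.inr (Or.inl h)
      · right; right
        obtain rfl : w = t.getLast ht := by simpa using h
        rw [List.getLast?_eq_getLast (List.cons_ne_nil a t), List.getLast_cons ht]

lemma subpath_spec {G : V → V → Prop} {p : List V} (hchain : List.Chain' G p)
    (a b : Fin p.length) (hab : a.val ≤ b.val) :
    List.Chain' G ((p.drop a.val).take (b.val - a.val + 1)) ∧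
    ((p.drop a.val).take (b.val - a.val + 1)).head? = some (p.get a) ∧
    ((p.drop a.val).take (b.val - a.val + 1)).getLast? = some (p.get b) ∧
    ((p.drop a.val).take (b.val - a.val + 1)) <:+: p ∧
    ∀ w ∈ ((p.drop a.val).take (b.val - a.val + 1)), ∃ m : Fin p.length,
      w = p.get m ∧ a.val ≤ m.val ∧ m.val ≤ b.val := by
  have hb := b.isLt
  have ha := a.isLt
  set l := (p.drop a.val).take (b.val - a.val + 1) with hldef
  have hinf : l <:+: p :=
    ((List.take_prefix _ _).isInfix).trans (List.drop_suffix _ _).isInfix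
  have hlen : l.length = b.val - a.val + 1 := by
    rw [hldef, List.length_take, List.length_drop]; omega
  have hget : ∀ n (hn : n < l.length), l[n]? = p[a.val + n]? := by
    intro n hn
    rw [hldef, List.getElem?_take, if_pos (by omega : n < b.val - a.val + 1),
      List.getElem?_drop]
  refine ⟨hchain.infix hinf, ?_, ?_, hinf, ?_⟩
  · rw [List.head?_eq_getElem?, hget 0 (by omega)]
    simp [List.getElem?_eq_getElem (by omega : a.val + 0 < p.length)]
  · rw [List.getLast?_eq_getElem?, hlen]
    simp only [Nat.add_sub_cancel]
    rw [hget (b.val - a.val) (by omega)]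
    have : a.val + (b.val - a.val) = b.val := by omega
    rw [this]
    simp [List.getElem?_eq_getElem hb]
  · intro w hw
    obtain ⟨n, hn, hgn⟩ := List.mem_iff_getElem.mp hw
    have h1 : l[n]? = some w := by rw [List.getElem?_eq_getElem hn, hgn]
    rw [hget n hn] at h1
    have hlt : a.val + n < p.length := by
      by_contra hcon
      rw [List.getElem?_eq_none (by omega)] at h1
      simp at h1
    refine ⟨⟨a.val + n, hlt⟩, ?_, show a.val ≤ a.val + n by omega, show a.val + n ≤ b.val by omega⟩
    have := List.getElem?_eq_getElem hlt
    rw [this] at h1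
    simpa using h1.symm

end Helpers

lemma detour_extract {V : Type*} {G : V → V → Prop} {p : List V} (hnodup : p.Nodup)
    (k : Fin p.length) :
    ∀ (N : ℕ) (l : List V) (i j : Fin p.length), l.length ≤ N →
    List.Chain' (Del G (p.get k)) l → l.head? = some (p.get i) →
    l.getLast? = some (p.get j) → i.val < k.val → k.val < j.val →
    ∃ (i' j' : Fin p.length) (s : List V), IsDetour G p k i' j' s ∧ ∀ w ∈ s, w ∈ l := by
  intro N
  induction N with
  | zero =>
    intro l i j hlen _ hh _ _ _
    have : l = [] := List.eq_nil_of_length_eq_zero (Nat.le_zero.mp hlen)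
    subst this; simp at hh
  | succ N ih =>
    intro l i j hlen hc hh hl hik hkj
    by_cases hP : ∀ w ∈ l.tail.dropLast, w ∉ p
    · exact ⟨i, j, l, ⟨⟨hc.imp (fun _ _ h => h.1), hh, hl⟩, hP, hik, hkj⟩, fun w hw => hw⟩
    · push_neg at hP
      obtain ⟨w, hwmem, hwp⟩ := hP
      obtain ⟨m, hm⟩ := List.get_of_mem hwp
      have hwtail : w ∈ l.tail := List.dropLast_subset _ hwmem
      have hwx : w ≠ p.get k := tail_ne_of_chain'_del hc w hwtail
      have hmk : m.val ≠ k.val := fun h => hwx (by rw [← hm]; exact congrArg p.get (Fin.ext h))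
      cases l with
      | nil => simp at hh
      | cons h0 tl =>
        obtain rfl : h0 = p.get i := by simpa using hh
        simp only [List.tail_cons] at hwmem hwtail
        have htl : tl ≠ [] := List.ne_nil_of_mem hwtail
        obtain ⟨s, t, hst⟩ := List.append_of_mem hwmem
        set z := tl.getLast htl with hz
        have htl2 : tl = (s ++ w :: t) ++ [z] := by
          rw [← hst, List.dropLast_append_getLast htl]
        have heq : p.get i :: tl = ((p.get i :: s) ++ [w]) ++ (t ++ [z]) := by
          simp [htl2]
        have heq2 : p.get i :: tl = (p.get i :: s) ++ (w :: (t ++ [z])) := by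
          simp [htl2]
        have hBlast : (w :: (t ++ [z])).getLast? = some z := by
          rw [show w :: (t ++ [z]) = (w :: t) ++ [z] by simp,
            List.getLast?_append]
          rfl
        have hzj : z = p.get j := by
          rw [heq2, List.getLast?_append, hBlast] at hl
          simpa using hl
        have hlenA : ((p.get i :: s) ++ [w]).length ≤ N := by
          have := congrArg List.length heq
          simp only [List.length_append, List.length_cons] at this ⊢
          simp only [List.length_cons] at hlen
          omega
        have hlenB : (w :: (t ++ [z])).length ≤ N := by
          have := congrArg List.length heq2
          simp only [List.length_append, List.length_cons] at this ⊢
          simp only [List.length_cons] at hlen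
          omega
        rcases Nat.lt_or_ge m.val k.val with hmlt | hmge
        · -- recurse on suffix w :: (t ++ [z]) from p.get m to p.get j
          have hcB : List.Chain' (Del G (p.get k)) (w :: (t ++ [z])) := by
            rw [heq2] at hc
            exact (List.isChain_append.mp hc).2.1
          obtain ⟨i', j', s', hd, hsub⟩ := ih (w :: (t ++ [z])) m j hlenB hcB
            (by rw [hm]; rfl) (by rw [hBlast, hzj]) hmlt hkj
          exact ⟨i', j', s', hd, fun y hy => by
            rw [heq2]; exact List.mem_append_right _ (hsub y hy)⟩
        · have hmgt : k.val < m.val := lt_of_le_of_ne hmge (fun h => hmk h.symm)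
          have hcA : List.Chain' (Del G (p.get k)) ((p.get i :: s) ++ [w]) := by
            rw [heq] at hc
            exact (List.isChain_append.mp hc).1
          obtain ⟨i', j', s', hd, hsub⟩ := ih ((p.get i :: s) ++ [w]) i m hlenA hcA
            (by simp) (by rw [List.getLast?_append, hm]; rfl) hik hmgt
          exact ⟨i', j', s', hd, fun y hy => by
            rw [heq]; exact List.mem_append_left _ (hsub y hy)⟩

/-- if a `u → v` walk `Q = Q₁ R Q₂` in `G − x` (with `x = p.get k`) has
its earliest `P`-vertex `p.get mn` before `x` and its latest `P`-vertex `p.get mx`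
after `x`, where `R` is a `p.get mn → p.get mx` subwalk, then there is a `u → v` walk
`Q' = Q₁ P₁ P₂ P₃ Q₂` in `G − x` with `P₁, P₃` (possibly empty) subpaths of `P` and
`P₂` a minimal detour of `x`. -/
theorem stmt_9 {V : Type*} (G : V → V → Prop) (p : List V)
    (hchain : List.Chain' G p) (hnodup : p.Nodup)
    (k : Fin p.length) (u v : V)
    (q1 r q2 : List V) (mn mx : Fin p.length)
    (h1 : DiWalk (Del G (p.get k)) u (p.get mn) q1)
    (hr : DiWalk (Del G (p.get k)) (p.get mn) (p.get mx) r)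
    (h2 : DiWalk (Del G (p.get k)) (p.get mx) v q2)
    (hmn : (mn : ℕ) < (k : ℕ)) (hmx : (k : ℕ) < (mx : ℕ))
    (hbounds : ∀ w ∈ q1 ++ r ++ q2, ∀ m : Fin p.length, w = p.get m →
      (mn : ℕ) ≤ (m : ℕ) ∧ (m : ℕ) ≤ (mx : ℕ)) :
    ∃ (a b : Fin p.length) (l1 l2 l3 : List V),
      DiWalk (Del G (p.get k)) (p.get mn) (p.get a) l1 ∧ l1 <:+: p ∧
      IsMinDetour G p k a b l2 ∧
      DiWalk (Del G (p.get k)) (p.get b) (p.get mx) l3 ∧ l3 <:+: p ∧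
      DiWalk (Del G (p.get k)) u v
        (q1 ++ l1.tail ++ l2.tail ++ l3.tail ++ q2.tail) := by
  classical
  obtain ⟨i0, j0, s0, hdet0, hsub0⟩ := detour_extract hnodup k r.length r mn mx le_rfl
    hr.1 hr.2.1 hr.2.2 hmn hmx
  have hSne : ∃ n, ∃ (i' j' : Fin p.length) (l' : List V),
      IsDetour G p k i' j' l' ∧ mn.val ≤ i'.val ∧ j'.val ≤ mx.val ∧ j'.val - i'.val = n := by
    refine ⟨j0.val - i0.val, i0, j0, s0, hdet0, ?_, ?_, rfl⟩
    · have hmem : p.get i0 ∈ r :=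
        hsub0 _ (List.mem_of_mem_head? (Option.mem_def.mpr hdet0.1.2.1))
      exact (hbounds _ (List.mem_append.mpr (Or.inl (List.mem_append.mpr (Or.inr hmem))))
        i0 rfl).1
    · have hmem : p.get j0 ∈ r :=
        hsub0 _ (List.mem_of_mem_getLast? (Option.mem_def.mpr hdet0.1.2.2))
      exact (hbounds _ (List.mem_append.mpr (Or.inl (List.mem_append.mpr (Or.inr hmem))))
        j0 rfl).2
  obtain ⟨a, b, l2, hdet, hmna, hbmx, hspan⟩ := Nat.find_spec hSne
  have hinj := List.nodup_iff_injective_get.mp hnodup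
  have hak : a.val < k.val := hdet.2.2.1
  have hkb : k.val < b.val := hdet.2.2.2
  have hmin : IsMinDetour G p k a b l2 := by
    refine ⟨hdet, fun i' j' l' hd hai hjb => ?_⟩
    have hfind : Nat.find hSne ≤ j'.val - i'.val :=
      Nat.find_min' hSne ⟨i', j', l', hd, le_trans hmna hai, le_trans hjb hbmx, rfl⟩
    omega
  obtain ⟨hc1, hh1, hl1, hinf1, hmem1⟩ := subpath_spec hchain mn a hmna
  obtain ⟨hc3, hh3, hl3, hinf3, hmem3⟩ := subpath_spec hchain b mx hbmx
  have D1 : DiWalk (Del G (p.get k)) (p.get mn) (p.get a)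
      ((p.drop mn.val).take (a.val - mn.val + 1)) := by
    refine ⟨chain'_del hc1 ?_, hh1, hl1⟩
    intro w hw heq
    obtain ⟨m, rfl, hm1, hm2⟩ := hmem1 w hw
    have : m = k := hinj heq
    omega
  have D3 : DiWalk (Del G (p.get k)) (p.get b) (p.get mx)
      ((p.drop b.val).take (mx.val - b.val + 1)) := by
    refine ⟨chain'_del hc3 ?_, hh3, hl3⟩
    intro w hw heq
    obtain ⟨m, rfl, hm1, hm2⟩ := hmem3 w hw
    have : m = k := hinj heq
    omega
  have D2 : DiWalk (Del G (p.get k)) (p.get a) (p.get b) l2 := by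
    refine ⟨chain'_del hdet.1.1 ?_, hdet.1.2.1, hdet.1.2.2⟩
    intro w hw heq
    rcases mem_split_cases hw with h | h | h
    · rw [hdet.1.2.1] at h
      obtain rfl : p.get a = w := by simpa using h
      have : a = k := hinj heq
      omega
    · exact hdet.2.1 w h (heq ▸ List.get_mem p k)
    · rw [hdet.1.2.2] at h
      obtain rfl : p.get b = w := by simpa using h
      have : b = k := hinj heq
      omega
  exact ⟨a, b, _, l2, _, D1, hinf1, hmin, D3, hinf3,
    diwalk_append (diwalk_append (diwalk_append (diwalk_append h1 D1) D2) D3) h2⟩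
end

section
/- Let G be a directed graph, P a simple directed path in G, and partition V(G)∖V(P) into layers L_ℓ, ..., L_1 where L_i consists of vertices reachable from p_i by a satellite path but not contained in any L_j with j > i. Then every edge of G from a vertex of layer L_j to a vertex of layer L_i satisfies j ≤ i (there is no edge from a higher-numbered layer to a strictly lower-numbered layer). -/
/-- The `i`-th layer: vertices off `p` reachable from `p.get i` by a satellite path
but not reachable from any later `p.get j` (`j > i`) by a satellite path
(this closed form is equivalent to the greedy definition `L_i = {reachable from p_i} ∖ ⋃_{j>i} L_j`). -/
def Layer {V : Type*} (G : V → V → Prop) (p : List V) (i : Fin p.length) : Set V :=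
  {w | w ∉ p ∧ Sat G p (p.get i) w ∧
    ∀ j : Fin p.length, (i : ℕ) < (j : ℕ) → ¬ Sat G p (p.get j) w}

/-- Extending a satellite walk ending at `w ∉ p` by one edge `G w z` gives a
satellite walk to `z`. -/
lemma Sat.extend {V : Type*} {G : V → V → Prop} {p : List V} {a w z : V}
    (h : Sat G p a w) (hwp : w ∉ p) (hedge : G w z) : Sat G p a z := by
  obtain ⟨l, ⟨hc, hh, hl⟩, hint⟩ := h
  have hlne : l ≠ [] := by rintro rfl; simp at hh
  refine ⟨l ++ [z], ⟨?_, ?_, ?_⟩, ?_⟩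
  · rw [show List.Chain' G (l ++ [z]) ↔ _ from List.isChain_append]
    refine ⟨hc, List.isChain_singleton z, ?_⟩
    intro x hx y hy
    simp only [List.head?_cons, Option.mem_def, Option.some.injEq] at hy
    rw [hl] at hx
    simp only [Option.mem_def, Option.some.injEq] at hx
    subst hx; subst hy; exact hedge
  · rcases l with _ | ⟨a', t⟩
    · simp at hh
    · simpa using hh
  · simp [List.getLast?_concat]
  · intro x hx
    rcases l with _ | ⟨a', t⟩
    · simp at hh
    · simp only [List.cons_append, List.tail_cons, List.dropLast_concat] at hx
      -- x ∈ t, and t's elements are either in t.dropLast (∉ p) or the last, which is w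
      rcases eq_or_ne t [] with rfl | htne
      · simp at hx
      · have hlast : t.getLast htne = w := by
          have : (a' :: t).getLast? = t.getLast? := by
            rcases t with _ | ⟨b, t'⟩
            · exact absurd rfl htne
            · rfl
          rw [this, List.getLast?_eq_getLast htne] at hl
          exact Option.some_injective _ hl
        have := List.dropLast_append_getLast htne
        rw [← this] at hx
        rcases List.mem_append.mp hx with h1 | h2
        · exact hint x (by simpa using h1)
        · simp only [List.mem_singleton] at h2
          subst h2; rw [hlast]; exact hwp

/-- every edge of `G` from a vertex of layer `L_j` to a vertex of
layer `L_i` satisfies `j ≤ i`. -/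
theorem stmt_11 {V : Type*} (G : V → V → Prop) (p : List V)
    (hchain : List.Chain' G p) (hnodup : p.Nodup)
    (i j : Fin p.length) (w z : V)
    (hw : w ∈ Layer G p j) (hz : z ∈ Layer G p i) (hedge : G w z) :
    (j : ℕ) ≤ (i : ℕ) := by
  by_contra h
  push_neg at h
  exact hz.2.2 j h (hw.2.1.extend hw.1 hedge)
end

section
/- Let G be a strongly connected directed graph, T a DFS tree of G rooted at s, and H the loop nesting forest of G with respect to T. Then every directed cycle C of G is contained in a single loop: there is a vertex u ∈ C such that u is an ancestor in T of all vertices of C, and every vertex of C belongs to loop(u). -/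
/-- Ancestor relation of the rooted tree given by the parent function `par`
with root `s`: `Anc par s a b` iff `a` is a (weak) ancestor of `b`. -/
def Anc {V : Type*} (par : V → V) (s : V) : V → V → Prop :=
  Relation.ReflTransGen (fun a b => b ≠ s ∧ par b = a)

/-- `loop(u)` with respect to the DFS tree `par` of `G`: descendants `x` of `u`
having a directed walk to `u` in `G` using only descendants of `u`. -/
def Loop {V : Type*} (G : V → V → Prop) (par : V → V) (s u : V) : Set V :=
  {x | Anc par s u x ∧ ∃ l, DiWalk G x u l ∧ ∀ y ∈ l, Anc par s u y}

private lemma mod_succ_aux (a n : ℕ) : (a % n + 1) % n = (a + 1) % n :=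
  (Nat.mod_modEq a n).add_right 1

/-- let `T` (given by `par`, rooted at `s`, with preorder numbering `num`,
satisfying the standard DFS-tree properties of `G`) be a DFS tree of the strongly
connected digraph `G`. Then every directed cycle `c` of `G` is contained in a single
loop: there is `u ∈ c` which is a `T`-ancestor of all vertices of `c`, and every
vertex of `c` belongs to `loop(u)`. -/
theorem stmt_12 {V : Type*} (G : V → V → Prop) (par : V → V) (s : V) (num : V → ℕ)
    (hsc : ∀ a b : V, Relation.ReflTransGen G a b)
    (hroot : par s = s)
    (htree_edge : ∀ a, a ≠ s → G (par a) a)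
    (hnum_inj : Function.Injective num)
    (hanc_num : ∀ a b, Anc par s a b → num a ≤ num b)
    (hinterval : ∀ a b c, Anc par s a b → num a ≤ num c → num c ≤ num b →
      Anc par s a c)
    (hdfs : ∀ a b, G a b → Anc par s a b ∨ Anc par s b a ∨ num b < num a)
    (c : List V) (hne : c ≠ []) (hcyc : List.Chain' G (c ++ [c.head hne])) :
    ∃ u ∈ c, (∀ w ∈ c, Anc par s u w) ∧ ∀ w ∈ c, w ∈ Loop G par s u := by
  classical
  have hn0 : 0 < c.length := List.length_pos_iff.mpr hne
  set n := c.length with hn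
  -- cyclic indexing function
  set f : ℕ → V := fun m => c.get ⟨m % n, Nat.mod_lt _ hn0⟩ with hf
  have hf_mem : ∀ m, f m ∈ c := fun m => List.get_mem _ _
  have hf_mod : ∀ m, f (m % n) = f m := by
    intro m
    simp only [hf]
    congr 1
    exact Fin.ext (Nat.mod_mod_of_dvd _ dvd_rfl)
  have hf_get : ∀ i (h : i < n), f i = c.get ⟨i, by omega⟩ := by
    intro i h
    simp only [hf]
    congr 1
    exact Fin.ext (Nat.mod_eq_of_lt h)
  -- the edge property of the cycle
  have edgef : ∀ m, G (f m) (f (m + 1)) := by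
    intro m
    rw [List.Chain', List.isChain_iff_getElem] at hcyc
    set i := m % n with hi
    have hiln : i < n := Nat.mod_lt _ hn0
    have hfm : f m = c.get ⟨i, by omega⟩ := by rw [← hf_mod m, hf_get i hiln]
    have hfm1 : f (m + 1) = c.get ⟨(i + 1) % n, Nat.mod_lt _ hn0⟩ := by
      rw [← hf_mod (m+1)]
      have : (m + 1) % n = (i + 1) % n := by rw [hi, mod_succ_aux]
      rw [this, hf_mod, hf]
    have hlen : (c ++ [c.head hne]).length = n + 1 := by simp [hn]
    have h2 : i + 1 < (c ++ [c.head hne]).length := by omega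
    have key := hcyc i h2
    have e1 : (c ++ [c.head hne])[i]'(by omega) = c.get ⟨i, by omega⟩ :=
      List.getElem_append_left (by omega)
    rw [e1] at key
    rw [hfm, hfm1]
    rcases Nat.lt_or_ge (i + 1) n with h3 | h3
    · have e2 : (c ++ [c.head hne])[i+1]'(by omega) = c.get ⟨i + 1, by omega⟩ :=
        List.getElem_append_left (by omega)
      rw [e2] at key
      have : (⟨(i+1) % n, Nat.mod_lt _ hn0⟩ : Fin c.length) = ⟨i + 1, by omega⟩ :=
        Fin.ext (Nat.mod_eq_of_lt h3)
      rw [this]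
      exact key
    · have hi1 : i + 1 = n := by omega
      have e2 : (c ++ [c.head hne])[i+1]'(by omega) = c.get ⟨0, by omega⟩ := by
        rw [List.getElem_append_right (by omega)]
        simp [hi1, ← hn, List.head_eq_getElem_zero hne]
      rw [e2] at key
      have : (⟨(i+1) % n, Nat.mod_lt _ hn0⟩ : Fin c.length) = ⟨0, by omega⟩ :=
        Fin.ext (by rw [hi1]; exact Nat.mod_self n)
      rw [this]
      exact key
  -- pick the vertex of minimal preorder number
  obtain ⟨k, -, hkmin⟩ := Finset.exists_min_image (Finset.univ : Finset (Fin n))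
    (fun i => num (f (i : ℕ))) ⟨⟨0, hn0⟩, Finset.mem_univ _⟩
  set u := f (k : ℕ) with hu
  have humem : u ∈ c := hf_mem _
  have hmin : ∀ m, num u ≤ num (f m) := by
    intro m
    have := hkmin ⟨m % n, Nat.mod_lt _ hn0⟩ (Finset.mem_univ _)
    simpa [hf_mod] using this
  -- u is an ancestor of everything reached going around from u
  have anc : ∀ j, Anc par s u (f ((k : ℕ) + j)) := by
    intro j
    induction j with
    | zero => exact Relation.ReflTransGen.refl
    | succ j ih =>
      have hedge := edgef ((k : ℕ) + j)
      have hstep : (k : ℕ) + j + 1 = (k : ℕ) + (j + 1) := by omega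
      rw [hstep] at hedge
      rcases hdfs _ _ hedge with h1 | h1 | h1
      · exact ih.trans h1
      · exact hinterval u _ _ ih (hmin _) (hanc_num _ _ h1)
      · exact hinterval u _ _ ih (hmin _) (le_of_lt h1)
  have hancf : ∀ m, Anc par s u (f m) := by
    intro m
    have := anc (n + m % n - (k : ℕ))
    have heq : f ((k : ℕ) + (n + m % n - (k : ℕ))) = f m := by
      have h1 : (k : ℕ) + (n + m % n - (k : ℕ)) = n + m % n := by
        have := k.2; omega
      rw [h1, ← hf_mod (n + m % n), Nat.add_mod_left, hf_mod, hf_mod]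
    rwa [heq] at this
  have hancmem : ∀ w ∈ c, Anc par s u w := by
    intro w hw
    obtain ⟨i, h, rfl⟩ := List.mem_iff_get.mp hw
    have : c.get i = f (i : ℕ) := (hf_get _ i.2).symm
    rw [this]
    exact hancf _
  refine ⟨u, humem, hancmem, ?_⟩
  -- every vertex of the cycle is in Loop u : exhibit a walk back to u
  intro w hw
  obtain ⟨i, hiln, rfl⟩ := List.mem_iff_get.mp hw
  have hwf : c.get i = f (i : ℕ) := (hf_get _ i.2).symm
  rw [hwf]
  set d := n + (k : ℕ) - (i : ℕ) with hd
  refine ⟨hancf _, (List.range (d + 1)).map (fun j => f ((i : ℕ) + j)), ⟨?_, ?_, ?_⟩, ?_⟩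
  · rw [List.Chain', List.isChain_iff_getElem]
    intro j hj
    simp only [List.length_map, List.length_range] at hj
    simp only [List.get_eq_getElem, List.getElem_map, List.getElem_range]
    have := edgef ((i : ℕ) + j)
    have hstep : (i : ℕ) + j + 1 = (i : ℕ) + (j + 1) := by omega
    rwa [hstep] at this
  · rw [List.head?_eq_getElem?, List.getElem?_eq_getElem (by simp)]
    simp
  · rw [List.getLast?_eq_getElem?]
    simp only [List.length_map, List.length_range, Nat.add_sub_cancel]
    rw [List.getElem?_eq_getElem (by simp)]
    simp only [List.getElem_map, List.getElem_range, Option.some_inj]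
    have h1 : (i : ℕ) + d = n + (k : ℕ) := by have := i.2; omega
    rw [h1, hu, ← hf_mod (n + (k : ℕ)), Nat.add_mod_left, hf_mod]
  · intro y hy
    simp only [List.mem_map, List.mem_range] at hy
    obtain ⟨j, -, rfl⟩ := hy
    exact hancf _
end

section
/- Let G be a strongly connected directed graph, s an arbitrary vertex, D the dominator tree of G rooted at s and D^R the dominator tree of the reverse graph G^R rooted at s. Let x ≠ s be a vertex whose removal disconnects G in the strong sense. Then every strongly connected component C of G−x satisfies: C ⊆ D[x]∖{x}, or C ⊆ D^R[x]∖{x}, or C = V ∖ (D[x] ∪ D^R[x]); in particular, the SCC of s in G−x is exactly V ∖ (D[x] ∪ D^R[x]) when x is a non-leaf in both D and D^R. -/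
/-- `a` dominates `b` in the reverse graph with respect to `s`: every `b → s` walk
contains `a`. Thus `{w | DomR G s x w}` is `D^R[x]`. -/
def DomR {V : Type*} (G : V → V → Prop) (s a b : V) : Prop :=
  ∀ l, DiWalk G b s l → a ∈ l

lemma diwalk_singleton {V : Type*} (G : V → V → Prop) (a : V) : DiWalk G a a [a] :=
  ⟨List.isChain_singleton a, rfl, rfl⟩

lemma diwalk_cons {V : Type*} {G : V → V → Prop} {a b c : V} {l : List V}
    (h : G a b) (hw : DiWalk G b c l) : DiWalk G a c (a :: l) := by
  obtain ⟨hc, hh, hl⟩ := hw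
  refine ⟨List.isChain_cons.2 ⟨?_, hc⟩, rfl, ?_⟩
  · intro y hy
    rw [hh] at hy
    cases hy
    exact h
  · cases l with
    | nil => simp at hh
    | cons d t => rw [List.getLast?_cons_cons]; exact hl

lemma rtg_del_walk {V : Type*} {G : V → V → Prop} {x a b : V}
    (h : Relation.ReflTransGen (Del G x) a b) (ha : a ≠ x) :
    ∃ l, DiWalk G a b l ∧ x ∉ l := by
  revert ha
  induction h using Relation.ReflTransGen.head_induction_on with
  | refl => intro hb; exact ⟨[b], diwalk_singleton G b, by simp [Ne.symm hb]⟩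
  | head hstep _ ih =>
    intro _
    obtain ⟨l, hw, hx⟩ := ih hstep.2.2
    exact ⟨_ :: l, diwalk_cons hstep.1 hw, by simp [Ne.symm hstep.2.1, hx]⟩

lemma walk_rtg {V : Type*} {G : V → V → Prop} {x : V} :
    ∀ (l : List V) (a b : V), DiWalk G a b l → x ∉ l →
      Relation.ReflTransGen (Del G x) a b := by
  intro l
  induction l with
  | nil => intro a b hw _; obtain ⟨_, hh, _⟩ := hw; simp at hh
  | cons c t ih =>
    intro a b hw hx
    obtain ⟨hc, hh, hl⟩ := hw
    obtain rfl : c = a := by simpa using hh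
    cases t with
    | nil =>
      obtain rfl : c = b := by simpa using hl
      exact Relation.ReflTransGen.refl
    | cons d t' =>
      simp only [List.mem_cons, not_or] at hx
      have hedge : Del G x c d :=
        ⟨(List.isChain_cons_cons.1 hc).1, Ne.symm hx.1, Ne.symm hx.2.1⟩
      have hrest : Relation.ReflTransGen (Del G x) d b := by
        refine ih d b ⟨(List.isChain_cons_cons.1 hc).2, rfl, ?_⟩ ?_
        · rw [List.getLast?_cons_cons] at hl; exact hl
        · simp only [List.mem_cons, not_or]; exact ⟨hx.2.1, hx.2.2⟩
      exact Relation.ReflTransGen.head hedge hrest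

lemma rtg_del_ne_start {V : Type*} {G : V → V → Prop} {x a b : V}
    (h : Relation.ReflTransGen (Del G x) a b) : a = b ∨ a ≠ x := by
  rcases h.cases_head with h | ⟨c, hc, _⟩
  · exact Or.inl h
  · exact Or.inr hc.2.1

lemma rtg_del_ne_end {V : Type*} {G : V → V → Prop} {x a b : V}
    (h : Relation.ReflTransGen (Del G x) a b) : b = a ∨ b ≠ x := by
  induction h with
  | refl => exact Or.inl rfl
  | tail _ hstep _ => exact Or.inr hstep.2.2

/-- for a strongly connected `G`, `x ≠ s` whose removal destroys strong
connectivity, every SCC `C` of `G − x` satisfies `C ⊆ D[x]∖{x}`, or `C ⊆ D^R[x]∖{x}`,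
or `C = V ∖ (D[x] ∪ D^R[x])`; and if `x` is a non-leaf in both dominator trees, the
SCC of `s` in `G − x` equals `V ∖ (D[x] ∪ D^R[x])`. -/
theorem stmt_13 {V : Type*} (G : V → V → Prop) (s x : V)
    (hsc : ∀ a b : V, Relation.ReflTransGen G a b)
    (hxs : x ≠ s)
    (hdisc : ∃ a b : V, a ≠ x ∧ b ≠ x ∧ ¬ Relation.ReflTransGen (Del G x) a b)
    (C : Set V)
    (hC : ∃ v, v ≠ x ∧ C = {w | Relation.ReflTransGen (Del G x) v w ∧
      Relation.ReflTransGen (Del G x) w v}) :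
    (C ⊆ {w | Dom G s x w} \ {x} ∨ C ⊆ {w | DomR G s x w} \ {x} ∨
      C = Set.univ \ ({w | Dom G s x w} ∪ {w | DomR G s x w})) ∧
    ((∃ a, a ≠ x ∧ Dom G s x a) → (∃ b, b ≠ x ∧ DomR G s x b) →
      {w | Relation.ReflTransGen (Del G x) s w ∧ Relation.ReflTransGen (Del G x) w s}
        = Set.univ \ ({w | Dom G s x w} ∪ {w | DomR G s x w})) := by
  have hsx : s ≠ x := Ne.symm hxs
  -- reachability from s without x refutes domination
  have hA : ∀ w, Relation.ReflTransGen (Del G x) s w → ¬ Dom G s x w := by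
    intro w hr hd
    obtain ⟨l, hw, hx⟩ := rtg_del_walk hr hsx
    exact hx (hd l hw)
  have hA' : ∀ w, ¬ Dom G s x w → Relation.ReflTransGen (Del G x) s w := by
    intro w hd
    simp only [Dom] at hd; push_neg at hd
    obtain ⟨l, hw, hx⟩ := hd
    exact walk_rtg l s w hw hx
  have hB : ∀ w, Relation.ReflTransGen (Del G x) w s → ¬ DomR G s x w := by
    intro w hr hd
    have hwx : w ≠ x := by
      rcases rtg_del_ne_start hr with h | h
      · exact h ▸ hsx
      · exact h
    obtain ⟨l, hw, hx⟩ := rtg_del_walk hr hwx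
    exact hx (hd l hw)
  have hB' : ∀ w, ¬ DomR G s x w → Relation.ReflTransGen (Del G x) w s := by
    intro w hd
    simp only [DomR] at hd; push_neg at hd
    obtain ⟨l, hw, hx⟩ := hd
    exact walk_rtg l w s hw hx
  have compl_eq : {w | Relation.ReflTransGen (Del G x) s w ∧
      Relation.ReflTransGen (Del G x) w s}
      = Set.univ \ ({w | Dom G s x w} ∪ {w | DomR G s x w}) := by
    ext w
    simp only [Set.mem_setOf_eq, Set.mem_diff, Set.mem_univ, Set.mem_union, true_and,
      not_or]
    exact ⟨fun ⟨h1, h2⟩ => ⟨hA w h1, hB w h2⟩,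
      fun ⟨h1, h2⟩ => ⟨hA' w h1, hB' w h2⟩⟩
  refine ⟨?_, fun _ _ => compl_eq⟩
  obtain ⟨v, hvx, rfl⟩ := hC
  by_cases h1 : Relation.ReflTransGen (Del G x) s v
  · by_cases h2 : Relation.ReflTransGen (Del G x) v s
    · refine Or.inr (Or.inr ?_)
      rw [← compl_eq]
      ext w
      simp only [Set.mem_setOf_eq]
      exact ⟨fun ⟨ha, hb⟩ => ⟨h1.trans ha, hb.trans h2⟩,
        fun ⟨ha, hb⟩ => ⟨h2.trans ha, hb.trans h1⟩⟩
    · refine Or.inr (Or.inl ?_)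
      intro w hw
      obtain ⟨hvw, hwv⟩ := hw
      have hwx : w ≠ x := by
        rcases rtg_del_ne_end hvw with h | h
        · exact h ▸ hvx
        · exact h
      refine ⟨?_, hwx⟩
      intro l hl
      by_contra hxl
      exact h2 ((hvw.trans (walk_rtg l w s hl hxl)))
  · refine Or.inl ?_
    intro w hw
    obtain ⟨hvw, hwv⟩ := hw
    have hwx : w ≠ x := by
      rcases rtg_del_ne_end hvw with h | h
      · exact h ▸ hvx
      · exact h
    refine ⟨?_, hwx⟩
    intro l hl
    by_contra hxl
    exact h1 ((walk_rtg l s w hl hxl).trans hwv)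
end
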